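/- arXiv:1709.05407 — 2 statements merged into one kernel-verified Lean document; each statement's English description precedes it below -/
import Mathlib

section
/- Let (X,τ) be a locally solid vector lattice such that the unbounded topology uτ is metrizable. Then there exists a sequence (e_n) in X_+ such that the τ-closure of the ideal generated by {e_n : n ∈ ℕ} is all of X. -/
open Filter Set Topology

variable {X : Type*} [Lattice X] [AddCommGroup X] [Module ℝ X]
  [CovariantClass X X (· + ·) (· ≤ ·)] [PosSMulMono ℝ X]

/-- The Archimedean property for a lattice-ordered group. -/
def VLArchimedean (X : Type*) [Lattice X] [AddCommGroup X] : Prop :=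
  ∀ x y : X, 0 ≤ x → (∀ n : ℕ, n • x ≤ y) → x = 0

/-- A set is solid if `x ∈ S` and `|y| ≤ |x|` imply `y ∈ S`. -/
def IsSolid (S : Set X) : Prop := ∀ ⦃x y : X⦄, x ∈ S → |y| ≤ |x| → y ∈ S

/-- A locally solid (linear) topology on a vector lattice. -/
def IsLocallySolidTop (τ : TopologicalSpace X) : Prop :=
  @IsTopologicalAddGroup X τ _ ∧ @ContinuousSMul ℝ X _ _ τ ∧
    ∀ U ∈ @nhds X τ 0, ∃ V ∈ @nhds X τ 0, IsSolid V ∧ V ⊆ U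

/-- An order ideal: a solid linear subspace. -/
def IsOrderIdeal (A : Set X) : Prop :=
  0 ∈ A ∧ (∀ x ∈ A, ∀ y ∈ A, x + y ∈ A) ∧ (∀ (c : ℝ), ∀ x ∈ A, c • x ∈ A) ∧ IsSolid A

/-- The order ideal generated by a set. -/
def idealGenerated (A : Set X) : Set X := ⋂₀ {I | IsOrderIdeal I ∧ A ⊆ I}

/-- A band: an order ideal closed under existing suprema. -/
def IsBand (B : Set X) : Prop :=
  IsOrderIdeal B ∧ ∀ D ⊆ B, ∀ x : X, IsLUB D x → x ∈ B

/-- The band generated by a set. -/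
def bandGenerated (A : Set X) : Set X := ⋂₀ {B | IsBand B ∧ A ⊆ B}

/-- `A` is a countable order basis: `A` is at most countable and generates `X` as a band. -/
def CountableOrderBasis (A : Set X) : Prop := A.Countable ∧ bandGenerated A = Set.univ

/-- The neighbourhood filter of zero of the unbounded topology `u_A τ`:
generated by the sets `{x : |x| ⊓ a ∈ U}` for `U` a `τ`-neighbourhood of zero, `a ∈ A₊`. -/
def unbNhdsZero (τ : TopologicalSpace X) (A : Set X) : Filter X :=
  ⨅ a ∈ {a ∈ A | 0 ≤ a}, Filter.comap (fun x => |x| ⊓ a) (@nhds X τ 0)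

/-- The unbounded topology `u_A τ` induced by the ideal `A`; `u τ = unbTopology τ Set.univ`. -/
def unbTopology (τ : TopologicalSpace X) (A : Set X) : TopologicalSpace X :=
  TopologicalSpace.mkOfNhds fun x => Filter.map (x + ·) (unbNhdsZero τ A)

/-- A sublattice/ideal is order dense if every nonzero positive vector dominates a
nonzero positive vector of it. -/
def OrderDense (A : Set X) : Prop := ∀ x : X, 0 < x → ∃ y ∈ A, 0 < y ∧ y ≤ x

/-- A minimal topology: a Hausdorff locally solid topology with no strictly coarser
Hausdorff locally solid topology. (In Mathlib's order on `TopologicalSpace`,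
`τ ≤ σ` means `τ` is finer than `σ`.) -/
def IsMinimalTop (τ : TopologicalSpace X) : Prop :=
  IsLocallySolidTop τ ∧ @T2Space X τ ∧
    ∀ σ : TopologicalSpace X, IsLocallySolidTop σ → @T2Space X σ → τ ≤ σ → σ = τ

/-- The countable sup property. -/
def CountableSupProperty (Y : Type*) [Lattice Y] : Prop :=
  ∀ S : Set Y, ∀ x : Y, S.Nonempty → IsLUB S x → ∃ C ⊆ S, C.Countable ∧ IsLUB C x

/-- Order convergence to zero of a net: there is a downward directed set `D` with
infimum `0`, each member of which eventually dominates `|x α|`. -/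
def OrderNull {ι : Type*} [Preorder ι] (x : ι → X) : Prop :=
  ∃ D : Set X, D.Nonempty ∧ (∀ a ∈ D, ∀ b ∈ D, ∃ c ∈ D, c ≤ a ∧ c ≤ b) ∧
    IsGLB D 0 ∧ ∀ d ∈ D, ∃ α₀ : ι, ∀ α, α₀ ≤ α → |x α| ≤ d

/-- Unbounded order (uo-) convergence to zero of a net. -/
def UoNull {ι : Type*} [Preorder ι] (x : ι → X) : Prop :=
  ∀ u : X, 0 ≤ u → OrderNull (fun α => |x α| ⊓ u)

/-- A set is topologically bounded if it is absorbed by every neighbourhood of zero. -/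
def TopBounded (τ : TopologicalSpace X) (S : Set X) : Prop :=
  ∀ U ∈ @nhds X τ 0, ∃ l : ℝ, 0 < l ∧ ∀ x ∈ S, l • x ∈ U

/-- A locally bounded topology: it has a topologically bounded neighbourhood of zero. -/
def LocallyBoundedTop (τ : TopologicalSpace X) : Prop :=
  ∃ V ∈ @nhds X τ 0, TopBounded τ V

/-- A submetrizable topology: finer than some metrizable linear topology.
(In Mathlib's order on `TopologicalSpace`, `τ ≤ σ` means `τ` is finer than `σ`.) -/
def Submetrizable (τ : TopologicalSpace X) : Prop :=
  ∃ σ : TopologicalSpace X, @IsTopologicalAddGroup X σ _ ∧ @ContinuousSMul ℝ X _ _ σ ∧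
    @TopologicalSpace.MetrizableSpace X σ ∧ τ ≤ σ

/-- A Riesz submetrizable topology: finer than some metrizable locally solid topology. -/
def RieszSubmetrizable (τ : TopologicalSpace X) : Prop :=
  ∃ σ : TopologicalSpace X, IsLocallySolidTop σ ∧ @TopologicalSpace.MetrizableSpace X σ ∧ τ ≤ σ

/-- Dedekind (order) completeness. -/
def DedekindComplete (Y : Type*) [Lattice Y] : Prop :=
  ∀ S : Set Y, S.Nonempty → BddAbove S → ∃ x, IsLUB S x

/-- Lateral completeness: every nonempty set of pairwise disjoint positive vectors
has a supremum. -/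
def LaterallyComplete (Y : Type*) [Lattice Y] [AddCommGroup Y] : Prop :=
  ∀ S : Set Y, S.Nonempty → (∀ x ∈ S, 0 ≤ x) → (S.Pairwise fun a b => a ⊓ b = 0) →
    ∃ x, IsLUB S x


/-! ### Auxiliary lemmas for STATEMENT 6 -/

private lemma half_le' {a b : X} (h : a + a ≤ b + b) : a ≤ b := by
  have h2 : (2:ℝ) • a ≤ (2:ℝ) • b := by rw [two_smul, two_smul]; exact h
  have h3 := smul_le_smul_of_nonneg_left h2 (by norm_num : (0:ℝ) ≤ (2:ℝ)⁻¹)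
  rwa [smul_smul, smul_smul, inv_mul_cancel₀ (by norm_num : (2:ℝ) ≠ 0), one_smul, one_smul] at h3

private lemma key_ineq' {u x : X} (hu : 0 ≤ u) :
    ((x - u) ⊔ 0) + (((x - u) ⊔ 0) ⊓ u) ≤ x ⊔ 0 := by
  letI : DistribLattice X := AddCommGroup.toDistribLattice X
  set d := x - u with hd
  have h0 : (0:X) ≤ d ⊔ -d := by
    have h' : d + -d ≤ (d ⊔ -d) + (d ⊔ -d) := add_le_add le_sup_left le_sup_right
    exact half_le' (by simpa using h')
  have habs : d ≤ (d + d) ⊔ 0 := by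
    have h1 : d + 0 ≤ d + (d ⊔ -d) := add_le_add le_rfl h0
    rw [add_zero, add_sup] at h1
    simpa using h1
  set t := d ⊔ 0 with ht
  have htt : t + t ≤ (d + d) ⊔ 0 := by
    calc t + t = (d + (d ⊔ 0)) ⊔ (0 + (d ⊔ 0)) := sup_add d 0 (d ⊔ 0)
      _ = ((d + d) ⊔ (d + 0)) ⊔ ((0 + d) ⊔ (0 + 0)) := by rw [add_sup, add_sup]
      _ ≤ (d + d) ⊔ 0 := by
          simp only [add_zero, zero_add]
          exact sup_le (sup_le le_sup_left habs) (sup_le habs le_sup_right)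
  calc t + (t ⊓ u) = (t + t) ⊓ (t + u) := add_inf t u t
    _ ≤ ((d + d) ⊔ 0) ⊓ (t + u) := inf_le_inf_right _ htt
    _ = ((d + d) ⊔ 0) ⊓ (x ⊔ u) := by rw [ht, sup_add, hd, sub_add_cancel, zero_add]
    _ = ((d + d) ⊓ (x ⊔ u)) ⊔ (0 ⊓ (x ⊔ u)) := inf_sup_right _ _ _
    _ ≤ x ⊔ 0 := by
        refine sup_le ?_ (inf_le_left.trans le_sup_right)
        rw [inf_sup_left]
        refine sup_le (inf_le_right.trans le_sup_left) ?_
        have hp : ((d + d) ⊓ u) + ((d + d) ⊓ u) ≤ x + x := by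
          calc ((d + d) ⊓ u) + ((d + d) ⊓ u) ≤ (d + d) + u := add_le_add inf_le_left inf_le_right
            _ = x + x - u := by rw [hd]; abel
            _ ≤ x + x := sub_le_self _ hu
        exact (half_le' hp).trans le_sup_left

private lemma main_ineq' {u : X} (hu : 0 ≤ u) :
    ∀ (n : ℕ) (x : X), n • (((x - n • u) ⊔ 0) ⊓ u) ≤ x ⊔ 0 := by
  intro n
  induction n with
  | zero => intro x; simp only [zero_nsmul]; exact le_sup_right
  | succ n ih =>
    intro x
    have hrw : x - (n + 1) • u = (x - u) - n • u := by rw [succ_nsmul]; abel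
    rw [hrw, succ_nsmul]
    have h1 : n • ((((x - u) - n • u) ⊔ 0) ⊓ u) ≤ (x - u) ⊔ 0 := ih (x - u)
    have h2 : (((x - u) - n • u) ⊔ 0) ⊓ u ≤ ((x - u) ⊔ 0) ⊓ u :=
      inf_le_inf_right u (sup_le_sup_right (sub_le_self _ (nsmul_nonneg hu n)) 0)
    exact (add_le_add h1 h2).trans (key_ineq' hu)

private lemma inf_add_ineq' {a p q : X} (ha : 0 ≤ a) :
    |p + q| ⊓ a ≤ |p| ⊓ a + |q| ⊓ a := by
  have h1 : |p + q| ⊓ a ≤ (|p| + |q|) ⊓ a := inf_le_inf_right a (abs_add_le p q)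
  refine h1.trans ?_
  have hb : (0:X) ≤ |p| := abs_nonneg p
  have hc : (0:X) ≤ |q| := abs_nonneg q
  have hrw : |p| ⊓ a + |q| ⊓ a = ((|p| + |q|) ⊓ (a + |q|)) ⊓ ((|p| + a) ⊓ (a + a)) := by
    rw [add_inf, inf_add, inf_add]
  rw [hrw]
  refine le_inf (le_inf inf_le_left ?_) (le_inf ?_ ?_)
  · exact inf_le_right.trans (le_add_of_nonneg_right hc)
  · exact inf_le_right.trans (le_add_of_nonneg_left hb)
  · exact inf_le_right.trans (le_add_of_nonneg_right ha)

private lemma comap_mono_sup' {τ : TopologicalSpace X} (hτ : IsLocallySolidTop τ)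
    {a c : X} (hac : a ≤ c) (ha : 0 ≤ a) :
    Filter.comap (fun x : X => |x| ⊓ c) (@nhds X τ 0) ≤
      Filter.comap (fun x : X => |x| ⊓ a) (@nhds X τ 0) := by
  refine Filter.le_def.2 fun s hs => ?_
  obtain ⟨U, hU, hUs⟩ := Filter.mem_comap.1 hs
  obtain ⟨V, hV, hVsolid, hVU⟩ := hτ.2.2 U hU
  refine Filter.mem_comap.2 ⟨V, hV, fun x hx => hUs ?_⟩
  have h1 : (0:X) ≤ |x| ⊓ a := le_inf (abs_nonneg x) ha
  have h2 : (0:X) ≤ |x| ⊓ c := le_inf (abs_nonneg x) (ha.trans hac)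
  exact hVU (hVsolid hx
    (by rw [abs_of_nonneg h1, abs_of_nonneg h2]; exact inf_le_inf_left _ hac))

private lemma mem_unbNhdsZero_iff' {τ : TopologicalSpace X} (hτ : IsLocallySolidTop τ)
    {s : Set X} :
    s ∈ unbNhdsZero τ (Set.univ : Set X) ↔
      ∃ a : X, 0 ≤ a ∧ ∃ U ∈ @nhds X τ 0, IsSolid U ∧ (fun x : X => |x| ⊓ a) ⁻¹' U ⊆ s := by
  have hdir : DirectedOn
      ((fun a : X => Filter.comap (fun x : X => |x| ⊓ a) (@nhds X τ 0)) ⁻¹'o (· ≥ ·))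
      {a : X | a ∈ (Set.univ : Set X) ∧ 0 ≤ a} := by
    rintro a ⟨-, ha⟩ b ⟨-, hb⟩
    exact ⟨a ⊔ b, ⟨trivial, ha.trans le_sup_left⟩,
      comap_mono_sup' hτ le_sup_left ha, comap_mono_sup' hτ le_sup_right hb⟩
  rw [unbNhdsZero, Filter.mem_biInf_of_directed hdir ⟨0, trivial, le_refl 0⟩]
  constructor
  · rintro ⟨a, ⟨-, ha⟩, hsa⟩
    obtain ⟨U, hU, hUs⟩ := Filter.mem_comap.1 hsa
    obtain ⟨V, hV, hVsolid, hVU⟩ := hτ.2.2 U hU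
    exact ⟨a, ha, V, hV, hVsolid, (Set.preimage_mono hVU).trans hUs⟩
  · rintro ⟨a, ha, U, hU, hUsolid, hsub⟩
    exact ⟨a, ⟨trivial, ha⟩, Filter.mem_comap.2 ⟨U, hU, hsub⟩⟩

private lemma zero_mem_unb' {τ : TopologicalSpace X} (hτ : IsLocallySolidTop τ)
    {s : Set X} (hs : s ∈ unbNhdsZero τ (Set.univ : Set X)) : (0:X) ∈ s := by
  obtain ⟨a, ha, U, hU, -, hsub⟩ := (mem_unbNhdsZero_iff' hτ).1 hs
  refine hsub ?_
  show |(0:X)| ⊓ a ∈ U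
  rw [abs_zero, inf_eq_left.2 ha]
  letI := τ
  exact mem_of_mem_nhds hU

private lemma unb_add' {τ : TopologicalSpace X} (hτ : IsLocallySolidTop τ) {s : Set X}
    (hs : s ∈ unbNhdsZero τ (Set.univ : Set X)) :
    ∃ v ∈ unbNhdsZero τ (Set.univ : Set X), ∀ p ∈ v, ∀ q ∈ v, p + q ∈ s := by
  obtain ⟨a, ha, U, hU, hUsolid, hsub⟩ := (mem_unbNhdsZero_iff' hτ).1 hs
  letI := τ
  haveI : IsTopologicalAddGroup X := hτ.1
  obtain ⟨W, hW, hWadd⟩ := exists_nhds_zero_half hU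
  obtain ⟨V, hV, hVsolid, hVW⟩ := hτ.2.2 W hW
  refine ⟨(fun x : X => |x| ⊓ a) ⁻¹' V,
    (mem_unbNhdsZero_iff' hτ).2 ⟨a, ha, V, hV, hVsolid, subset_rfl⟩, ?_⟩
  intro p hp q hq
  refine hsub ?_
  show |p + q| ⊓ a ∈ U
  have hz : |p| ⊓ a + |q| ⊓ a ∈ U := hWadd _ (hVW hp) _ (hVW hq)
  have h1 : (0:X) ≤ |p + q| ⊓ a := le_inf (abs_nonneg _) ha
  have h2 : (0:X) ≤ |p| ⊓ a + |q| ⊓ a :=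
    add_nonneg (le_inf (abs_nonneg _) ha) (le_inf (abs_nonneg _) ha)
  exact hUsolid hz (by rw [abs_of_nonneg h1, abs_of_nonneg h2]; exact inf_add_ineq' ha)

private lemma unb_nhds_eq' {τ : TopologicalSpace X} (hτ : IsLocallySolidTop τ) (x : X) :
    @nhds X (unbTopology τ Set.univ) x =
      Filter.map (x + ·) (unbNhdsZero τ (Set.univ : Set X)) := by
  refine TopologicalSpace.nhds_mkOfNhds _ _ ?_ ?_
  · intro y
    refine Filter.le_def.2 fun s hs => ?_
    have h0 : (0:X) ∈ (fun z => y + z) ⁻¹' s := zero_mem_unb' hτ (Filter.mem_map.1 hs)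
    simpa using h0
  · intro y s hs
    have hs0 : (fun z => y + z) ⁻¹' s ∈ unbNhdsZero τ (Set.univ : Set X) :=
      Filter.mem_map.1 hs
    obtain ⟨v, hv, hvv⟩ := unb_add' hτ hs0
    rw [Filter.eventually_map]
    refine Filter.mem_of_superset hv ?_
    intro w hw
    show s ∈ Filter.map (fun z => (y + w) + z) (unbNhdsZero τ (Set.univ : Set X))
    rw [Filter.mem_map]
    refine Filter.mem_of_superset hv ?_
    intro q hq
    have h1 : y + (w + q) ∈ s := hvv w hw q hq
    show y + w + q ∈ s
    rwa [add_assoc]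

private lemma idealGenerated_isOrderIdeal' (A : Set X) :
    IsOrderIdeal (idealGenerated A) ∧ A ⊆ idealGenerated A := by
  constructor
  · refine ⟨?_, ?_, ?_, ?_⟩
    · exact Set.mem_sInter.2 fun J hJ => hJ.1.1
    · intro x hx y hy
      exact Set.mem_sInter.2 fun J hJ =>
        hJ.1.2.1 x (Set.mem_sInter.1 hx J hJ) y (Set.mem_sInter.1 hy J hJ)
    · intro c x hx
      exact Set.mem_sInter.2 fun J hJ => hJ.1.2.2.1 c x (Set.mem_sInter.1 hx J hJ)
    · intro x y hx hle
      exact Set.mem_sInter.2 fun J hJ => hJ.1.2.2.2 (Set.mem_sInter.1 hx J hJ) hle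
  · exact fun x hx => Set.mem_sInter.2 fun J hJ => hJ.2 hx

/-- if `u τ` is metrizable then there is a sequence of positive vectors
generating a `τ`-dense ideal. -/
theorem stmt6 (hArch : VLArchimedean X) (τ : TopologicalSpace X) (hτ : IsLocallySolidTop τ)
    (hmet : @TopologicalSpace.MetrizableSpace X (unbTopology τ Set.univ)) :
    ∃ e : ℕ → X, (∀ n, 0 ≤ e n) ∧
      @closure X τ (idealGenerated (Set.range e)) = Set.univ := by
  classical
  set F := unbNhdsZero τ (Set.univ : Set X) with hFdef
  have hnhds : @nhds X (unbTopology τ Set.univ) 0 = F := by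
    rw [unb_nhds_eq' hτ 0]
    have hid : (fun y : X => (0:X) + y) = id := funext fun y => zero_add y
    rw [hid, Filter.map_id]
  haveI hcg : F.IsCountablyGenerated := by
    rw [← hnhds]
    letI := unbTopology τ (Set.univ : Set X)
    haveI := hmet
    infer_instance
  obtain ⟨B, hB⟩ := F.exists_antitone_basis
  have hchoice : ∀ m : ℕ, ∃ a : X, 0 ≤ a ∧ ∃ U ∈ @nhds X τ 0,
      IsSolid U ∧ (fun x : X => |x| ⊓ a) ⁻¹' U ⊆ B m :=
    fun m => (mem_unbNhdsZero_iff' hτ).1 (hB.1.mem_of_mem trivial)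
  choose e he U hU hUsolid hUsub using hchoice
  refine ⟨e, he, ?_⟩
  letI := τ
  haveI hTG : IsTopologicalAddGroup X := hτ.1
  haveI hCS : ContinuousSMul ℝ X := hτ.2.1
  obtain ⟨hI, hAI⟩ := idealGenerated_isOrderIdeal' (Set.range e)
  set I := idealGenerated (Set.range e) with hIdef
  let G : AddSubgroup X :=
    { carrier := I
      zero_mem' := hI.1
      add_mem' := fun {p q} hp hq => hI.2.1 p hp q hq
      neg_mem' := fun {p} hp => by
        have h := hI.2.2.1 (-1) p hp
        rwa [neg_smul, one_smul] at h }
  have hpos : ∀ x : X, 0 ≤ x → x ∈ closure I := by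
    intro x hx
    rw [mem_closure_iff_nhds]
    intro W hW
    have hW0 : (fun r : X => x + r) ⁻¹' W ∈ (𝓝 (0:X)) := by
      have hmap : Filter.map (fun r : X => x + r) (𝓝 (0:X)) = 𝓝 x := map_add_left_nhds_zero x
      rw [← hmap] at hW
      exact Filter.mem_map.1 hW
    obtain ⟨V, hV, hVsolid, hVW⟩ := hτ.2.2 _ hW0
    have hSF : {r : X | |r| ⊓ x ∈ V} ∈ F :=
      (mem_unbNhdsZero_iff' hτ).2 ⟨x, hx, V, hV, hVsolid, fun r hr => hr⟩
    obtain ⟨m, -, hmS⟩ := hB.1.mem_iff.1 hSF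
    -- choose a large k
    have hten : Filter.Tendsto (fun k : ℕ => (1/(k:ℝ)) • x) Filter.atTop (𝓝 (0:X)) := by
      have h1 := (tendsto_one_div_atTop_nhds_zero_nat (𝕜 := ℝ)).smul_const x
      simpa using h1
    obtain ⟨k, hkmem, hk1⟩ :=
      ((hten.eventually_mem (hU m)).and (Filter.eventually_ge_atTop 1)).exists
    have hk0 : (0:ℝ) < (k:ℝ) := by exact_mod_cast hk1
    set c := k • e m with hc
    have hc0 : (0:X) ≤ c := nsmul_nonneg (he m) k
    set z := (x - c) ⊔ 0 with hz
    have hz0 : (0:X) ≤ z := le_sup_right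
    have hzx : z ≤ x := sup_le (sub_le_self _ hc0) hx
    -- the main inequality
    have hmain : (k:ℝ) • (z ⊓ e m) ≤ x := by
      rw [Nat.cast_smul_eq_nsmul]
      have h1 := main_ineq' (he m) k x
      rwa [sup_of_le_left hx] at h1
    have hle : z ⊓ e m ≤ (1/(k:ℝ)) • x := by
      have h2 := smul_le_smul_of_nonneg_left hmain (le_of_lt (by positivity : (0:ℝ) < 1/(k:ℝ)))
      rwa [smul_smul, one_div_mul_cancel (ne_of_gt hk0), one_smul] at h2
    have hinf0 : (0:X) ≤ z ⊓ e m := le_inf hz0 (he m)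
    have hsm0 : (0:X) ≤ (1/(k:ℝ)) • x := smul_nonneg (by positivity) hx
    have hzUm : z ⊓ e m ∈ U m :=
      hUsolid m hkmem (by rw [abs_of_nonneg hinf0, abs_of_nonneg hsm0]; exact hle)
    have hzBm : z ∈ B m := hUsub m (by show |z| ⊓ e m ∈ U m; rwa [abs_of_nonneg hz0])
    have hzV : z ∈ V := by
      have h3 : |z| ⊓ x ∈ V := hmS hzBm
      rwa [abs_of_nonneg hz0, inf_eq_left.2 hzx] at h3
    have hnegzV : -z ∈ V := hVsolid hzV (by rw [abs_neg])
    set y := x - z with hy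
    have hyW : y ∈ W := by
      have h4 : x + (-z) ∈ W := hVW hnegzV
      rwa [← sub_eq_add_neg] at h4
    have hyI : y ∈ I := by
      have hyc : y = c ⊓ x := by rw [hy, hz, sub_sup, sub_sub_cancel, sub_zero]
      have hy0 : (0:X) ≤ y := by rw [hyc]; exact le_inf hc0 hx
      have hcI : c ∈ I := by
        have h5 : e m ∈ I := hAI (Set.mem_range_self m)
        have h6 := hI.2.2.1 ((k:ℕ):ℝ) (e m) h5
        rwa [Nat.cast_smul_eq_nsmul] at h6
      refine hI.2.2.2 hcI ?_
      rw [abs_of_nonneg hy0, abs_of_nonneg hc0, hyc]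
      exact inf_le_left
    exact ⟨y, hyW, hyI⟩
  have hall : ∀ x : X, x ∈ closure I := by
    intro x
    have h1 : (x ⊔ 0) ∈ closure I := hpos _ le_sup_right
    have h2 : ((-x) ⊔ 0) ∈ closure I := hpos _ le_sup_right
    have hdiff : (x ⊔ 0) - ((-x) ⊔ 0) = x := by
      rw [sub_eq_add_neg, neg_sup, neg_neg, neg_zero, add_comm, inf_add_sup, add_zero]
    have h3 : (x ⊔ 0) - ((-x) ⊔ 0) ∈ G.topologicalClosure :=
      G.topologicalClosure.sub_mem h1 h2
    rw [hdiff] at h3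
    exact h3
  exact Set.eq_univ_iff_forall.2 hall
end

section
/- Let (X,τ) be a complete metrizable locally solid vector lattice (complete with respect to the canonical uniformity of the topological additive group). Then the unbounded topology uτ is metrizable if and only if X has a quasi-interior point. -/
open Filter Set Topology

variable {X : Type*} [Lattice X] [AddCommGroup X] [Module ℝ X]
  [CovariantClass X X (· + ·) (· ≤ ·)] [PosSMulMono ℝ X]

set_option linter.unusedSectionVars false

private def auxOrder (X : Type*) [Lattice X] [AddCommGroup X]
    [CovariantClass X X (· + ·) (· ≤ ·)] : IsOrderedAddMonoid X :=
  { add_le_add_left := fun a b h c => by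
      have := (CovariantClass.elim c h : c + a ≤ c + b)
      rwa [add_comm c, add_comm c] at this }

lemma aux_abs_of_nonneg {a : X} (h : 0 ≤ a) : |a| = a :=
  sup_eq_left.2 ((neg_nonpos.2 h).trans h)

lemma aux_abs_eq_zero {a : X} (h : |a| = 0) : a = 0 := by
  have h1 : a ≤ 0 := h ▸ le_abs_self a
  have h2 : -a ≤ 0 := h ▸ neg_le_abs a
  exact le_antisymm h1 (neg_nonpos.1 h2)

lemma aux_superadd {u v a : X} (hu : 0 ≤ u) (hv : 0 ≤ v) (ha : 0 ≤ a) :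
    (u + v) ⊓ a ≤ u ⊓ a + v ⊓ a := by
  rw [add_inf v a (u ⊓ a), inf_add u a v, inf_add u a a]
  refine le_inf (le_inf inf_le_left ?_) (le_inf ?_ ?_)
  · exact le_trans inf_le_right (le_add_of_nonneg_right hv)
  · exact le_trans inf_le_right (le_add_of_nonneg_left hu)
  · exact le_trans inf_le_right (le_add_of_nonneg_left ha)

lemma aux_inf_add_le {u s t : X} (ht : 0 ≤ t) : u ⊓ (s + t) ≤ u ⊓ s + t := by
  rw [inf_add u s t]
  exact le_inf (le_trans inf_le_left (le_add_of_nonneg_right ht)) inf_le_right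

lemma aux_smul_le_smul {c d : ℝ} {x : X} (h : c ≤ d) (hx : 0 ≤ x) : c • x ≤ d • x := by
  have h1 : 0 ≤ (d - c) • x := smul_nonneg (by linarith) hx
  calc c • x ≤ c • x + (d - c) • x := le_add_of_nonneg_right h1
    _ = d • x := by rw [← add_smul]; ring_nf

lemma aux_smul_sup {c : ℝ} (hc : 0 ≤ c) (a b : X) : c • (a ⊔ b) = c • a ⊔ c • b := by
  rcases eq_or_lt_of_le hc with rfl | hc
  · simp
  · apply le_antisymm
    · have h1 : a ≤ c⁻¹ • (c • a ⊔ c • b) := by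
        have := smul_le_smul_of_nonneg_left (le_sup_left : c • a ≤ c • a ⊔ c • b)
          (inv_nonneg.2 hc.le)
        rwa [inv_smul_smul₀ hc.ne'] at this
      have h2 : b ≤ c⁻¹ • (c • a ⊔ c • b) := by
        have := smul_le_smul_of_nonneg_left (le_sup_right : c • b ≤ c • a ⊔ c • b)
          (inv_nonneg.2 hc.le)
        rwa [inv_smul_smul₀ hc.ne'] at this
      have h3 := smul_le_smul_of_nonneg_left (sup_le h1 h2) hc.le
      rwa [smul_inv_smul₀ hc.ne'] at h3
    · exact sup_le (smul_le_smul_of_nonneg_left le_sup_left hc.le)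
        (smul_le_smul_of_nonneg_left le_sup_right hc.le)

lemma aux_abs_smul_of_nonneg {c : ℝ} (hc : 0 ≤ c) (a : X) : |c • a| = c • |a| := by
  show (c • a) ⊔ -(c • a) = c • (a ⊔ -a)
  rw [aux_smul_sup hc a (-a), smul_neg]

lemma aux_abs_smul (c : ℝ) (a : X) : |c • a| = |c| • |a| := by
  rcases le_or_gt 0 c with hc | hc
  · rw [abs_of_nonneg hc, aux_abs_smul_of_nonneg hc]
  · have h : c • a = (-c) • (-a) := by rw [neg_smul_neg]
    rw [h, abs_of_neg hc, aux_abs_smul_of_nonneg (by linarith) (-a), abs_neg]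

lemma aux_ideal_dominated (e : X) (he : 0 ≤ e) :
    idealGenerated {e} ⊆ {x : X | ∃ c : ℝ, 0 ≤ c ∧ |x| ≤ c • e} := by
  intro x hx
  refine hx _ ⟨⟨⟨0, le_rfl, by simp⟩, ?_, ?_, ?_⟩, singleton_subset_iff.2 ⟨1, zero_le_one, by
    rw [aux_abs_of_nonneg he, one_smul]⟩⟩
  · rintro u ⟨cu, hcu, hu⟩ v ⟨cv, hcv, hv⟩
    exact ⟨cu + cv, by linarith, le_trans (abs_add_le u v) (by rw [add_smul]; exact add_le_add hu hv)⟩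
  · rintro r u ⟨cu, hcu, hu⟩
    refine ⟨|r| * cu, mul_nonneg (abs_nonneg r) hcu, ?_⟩
    rw [aux_abs_smul, mul_smul]
    exact smul_le_smul_of_nonneg_left hu (abs_nonneg r)
  · rintro u v ⟨cu, hcu, hu⟩ hvu
    exact ⟨cu, hcu, le_trans hvu hu⟩

lemma aux_mem_idealGenerated {e z : X} (c : ℝ) (hc : 0 ≤ c) (he : 0 ≤ e) (hz : |z| ≤ c • e) :
    z ∈ idealGenerated {e} := by
  rintro I ⟨⟨h0, hadd, hsmul, hsolid⟩, hsub⟩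
  have h1 : c • e ∈ I := hsmul c e (hsub rfl)
  exact hsolid h1 (by rwa [aux_abs_of_nonneg (smul_nonneg hc he)])

lemma aux_nsmul_nonneg {a : X} (h : 0 ≤ a) (n : ℕ) : 0 ≤ n • a := by
  letI := auxOrder X; exact nsmul_nonneg h n

lemma aux_key {x a : X} (hx : 0 ≤ x) (ha : 0 ≤ a) {m : ℕ} (hm : 1 ≤ m) :
    (x - x ⊓ (m • a)) ⊓ a ≤ ((m : ℝ)⁻¹) • x := by
  letI := auxOrder X
  set g : ℕ → X := fun j => x ⊓ (j • a) with hg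
  set d : ℕ → X := fun j => (x - g j) ⊓ a with hd
  have step : ∀ j, d j ≤ g (j + 1) - g j := by
    intro j
    have h1 : d j + g j = x ⊓ (a + g j) := by
      rw [hd]
      show (x - g j) ⊓ a + g j = x ⊓ (a + g j)
      rw [inf_add (x - g j) a (g j), sub_add_cancel]
    have h2 : x ⊓ (a + g j) ≤ g (j + 1) := by
      refine le_inf inf_le_left ?_
      calc x ⊓ (a + g j) ≤ a + g j := inf_le_right
        _ ≤ a + j • a := add_le_add_right inf_le_right a
        _ = (j + 1) • a := by rw [succ_nsmul, add_comm]
    rw [le_sub_iff_add_le, h1]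
    exact h2
  have dmono : ∀ j k : ℕ, j ≤ k → d k ≤ d j := by
    intro j k hjk
    have h1 : g j ≤ g k := inf_le_inf_left x (nsmul_le_nsmul_left ha hjk)
    exact inf_le_inf_right a (sub_le_sub_left h1 x)
  have hsum : m • d m ≤ x := by
    calc m • d m = ∑ _j ∈ Finset.range m, d m := by rw [Finset.sum_const, Finset.card_range]
      _ ≤ ∑ j ∈ Finset.range m, d (j + 1) :=
          Finset.sum_le_sum fun j hj => dmono (j + 1) m (Finset.mem_range.1 hj)
      _ ≤ ∑ j ∈ Finset.range m, (g (j + 1 + 1) - g (j + 1)) :=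
          Finset.sum_le_sum fun j _ => step (j + 1)
      _ = g (m + 1) - g 1 := Finset.sum_range_sub (fun j => g (j + 1)) m
      _ ≤ x - 0 := sub_le_sub inf_le_left (le_inf hx (by simpa using ha))
      _ = x := sub_zero x
  have hcast : ((m : ℝ)) • d m = m • d m := Nat.cast_smul_eq_nsmul ℝ m (d m)
  have hne : ((m : ℝ)) ≠ 0 := Nat.cast_ne_zero.2 (by omega)
  have := smul_le_smul_of_nonneg_left hsum (inv_nonneg.2 (Nat.cast_nonneg (α := ℝ) m))
  rw [← hcast, inv_smul_smul₀ hne] at this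
  exact this


section AuxTop

variable [τ : TopologicalSpace X]

lemma aux_solid_symm {V : Set X} (hV : IsSolid V) {z : X} (hz : z ∈ V) : -z ∈ V :=
  hV hz (by rw [abs_neg])

lemma aux_basic_mem {a : X} (ha : 0 ≤ a) {V : Set X} (hV : V ∈ 𝓝 (0 : X)) :
    (fun x : X => |x| ⊓ a) ⁻¹' V ∈ unbNhdsZero τ Set.univ := by
  unfold unbNhdsZero
  refine mem_iInf_of_mem a (mem_iInf_of_mem ⟨mem_univ a, ha⟩ ?_)
  exact preimage_mem_comap hV

lemma aux_comap_mono (hτ : IsLocallySolidTop τ) {a b : X} (ha : 0 ≤ a) (hab : a ≤ b) :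
    Filter.comap (fun x : X => |x| ⊓ b) (𝓝 0) ≤ Filter.comap (fun x : X => |x| ⊓ a) (𝓝 0) := by
  intro s hs
  obtain ⟨V, hV, hVs⟩ := mem_comap.1 hs
  obtain ⟨V₀, hV₀, hsol, hsub⟩ := hτ.2.2 V hV
  refine mem_comap.2 ⟨V₀, hV₀, fun x hx => hVs (hsub (hsol hx ?_))⟩
  rw [aux_abs_of_nonneg (le_inf (abs_nonneg x) ha),
    aux_abs_of_nonneg (le_inf (abs_nonneg x) (ha.trans hab))]
  exact inf_le_inf_left _ hab

lemma aux_mem_unb (hτ : IsLocallySolidTop τ) {s : Set X} :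
    s ∈ unbNhdsZero τ Set.univ ↔
      ∃ a : X, 0 ≤ a ∧ ∃ V ∈ 𝓝 (0 : X), (fun x : X => |x| ⊓ a) ⁻¹' V ⊆ s := by
  have heq : unbNhdsZero τ Set.univ =
      ⨅ a : {a : X // a ∈ {a : X | a ∈ (Set.univ : Set X) ∧ 0 ≤ a}},
        Filter.comap (fun x : X => |x| ⊓ a.1) (𝓝 0) := by
    unfold unbNhdsZero
    exact iInf_subtype'
  haveI : Nonempty {a : X // a ∈ {a : X | a ∈ (Set.univ : Set X) ∧ 0 ≤ a}} :=
    ⟨⟨0, ⟨mem_univ 0, le_rfl⟩⟩⟩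
  have hdir : Directed (· ≥ ·)
      (fun a : {a : X // a ∈ {a : X | a ∈ (Set.univ : Set X) ∧ 0 ≤ a}} =>
        Filter.comap (fun x : X => |x| ⊓ a.1) (𝓝 (0 : X))) := by
    rintro ⟨a, -, ha⟩ ⟨b, -, hb⟩
    exact ⟨⟨a ⊔ b, ⟨mem_univ _, ha.trans le_sup_left⟩⟩,
      aux_comap_mono hτ ha le_sup_left, aux_comap_mono hτ hb le_sup_right⟩
  constructor
  · intro hs
    rw [heq] at hs
    obtain ⟨⟨a, hp⟩, hmem⟩ := (mem_iInf_of_directed hdir s).1 hs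
    have ha : 0 ≤ a := hp.2
    obtain ⟨V, hV, hVs⟩ := mem_comap.1 hmem
    exact ⟨a, ha, V, hV, hVs⟩
  · rintro ⟨a, ha, V, hV, hVs⟩
    exact mem_of_superset (aux_basic_mem ha hV) hVs

lemma aux_half (hτ : IsLocallySolidTop τ) {V : Set X} (hV : V ∈ 𝓝 (0 : X)) :
    ∃ W ∈ 𝓝 (0 : X), IsSolid W ∧ ∀ v ∈ W, ∀ w ∈ W, v + w ∈ V := by
  haveI := hτ.1
  obtain ⟨V', hV', h'⟩ := exists_nhds_zero_half hV
  obtain ⟨W, hW, hsol, hsub⟩ := hτ.2.2 V' hV'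
  exact ⟨W, hW, hsol, fun v hv w hw => h' v (hsub hv) w (hsub hw)⟩

lemma aux_add_small {a : X} (ha : 0 ≤ a) {V W : Set X} (hVsol : IsSolid V)
    (hsum : ∀ v ∈ W, ∀ w ∈ W, v + w ∈ V) {y w : X}
    (hy : |y| ⊓ a ∈ W) (hw : |w| ⊓ a ∈ W) : |y + w| ⊓ a ∈ V := by
  have hmem : |y| ⊓ a + |w| ⊓ a ∈ V := hsum _ hy _ hw
  have hle : |y + w| ⊓ a ≤ |y| ⊓ a + |w| ⊓ a :=
    le_trans (inf_le_inf_right a (abs_add_le y w))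
      (aux_superadd (abs_nonneg y) (abs_nonneg w) ha)
  refine hVsol hmem ?_
  rw [aux_abs_of_nonneg (le_inf (abs_nonneg _) ha),
    aux_abs_of_nonneg (add_nonneg (le_inf (abs_nonneg _) ha) (le_inf (abs_nonneg _) ha))]
  exact hle

lemma aux_nhds_unb (hτ : IsLocallySolidTop τ) (x : X) :
    @nhds X (unbTopology τ Set.univ) x = Filter.map (x + ·) (unbNhdsZero τ Set.univ) := by
  refine TopologicalSpace.nhds_mkOfNhds _ x ?_ ?_
  · intro y s hs
    rw [mem_map] at hs
    obtain ⟨a, ha, V, hV, hsub⟩ := (aux_mem_unb hτ).1 hs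
    have h0 : (0 : X) ∈ (fun x : X => |x| ⊓ a) ⁻¹' V := by
      show |(0 : X)| ⊓ a ∈ V
      rw [abs_zero, inf_eq_left.2 ha]
      exact mem_of_mem_nhds hV
    have := hsub h0
    simpa using this
  · intro y s hs
    rw [mem_map] at hs
    obtain ⟨a, ha, V, hV, hsub⟩ := (aux_mem_unb hτ).1 hs
    obtain ⟨V₀, hV₀, hV₀sol, hV₀sub⟩ := hτ.2.2 V hV
    obtain ⟨W, hW, hWsol, hWsum⟩ := aux_half hτ hV₀
    rw [eventually_iff, mem_map]
    refine mem_of_superset (aux_basic_mem ha hW) ?_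
    intro b hb
    simp only [mem_preimage, mem_setOf_eq, mem_map]
    refine mem_of_superset (aux_basic_mem ha hW) ?_
    intro w hw
    have : |b + w| ⊓ a ∈ V₀ := aux_add_small ha hV₀sol hWsum hb hw
    have h2 : b + w ∈ (fun x : X => |x| ⊓ a) ⁻¹' V := hV₀sub this
    have h3 := hsub h2
    simpa [add_assoc] using h3

lemma aux_unb_group (hτ : IsLocallySolidTop τ) :
    @IsTopologicalAddGroup X (unbTopology τ Set.univ) _ := by
  have hnhds := aux_nhds_unb hτ
  have h0 : @nhds X (unbTopology τ Set.univ) 0 = unbNhdsZero τ Set.univ := by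
    rw [hnhds 0]
    have : (fun y : X => 0 + y) = id := funext fun y => zero_add y
    rw [this, map_id]
  refine @IsTopologicalAddGroup.of_comm_of_nhds_zero X _ (unbTopology τ Set.univ) ?_ ?_ ?_
  · -- addition
    rw [h0]
    intro s hs
    obtain ⟨a, ha, V, hV, hsub⟩ := (aux_mem_unb hτ).1 hs
    obtain ⟨V₀, hV₀, hV₀sol, hV₀sub⟩ := hτ.2.2 V hV
    obtain ⟨W, hW, hWsol, hWsum⟩ := aux_half hτ hV₀
    rw [mem_map]
    refine mem_of_superset (prod_mem_prod (aux_basic_mem ha hW) (aux_basic_mem ha hW)) ?_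
    rintro ⟨u, v⟩ ⟨hu, hv⟩
    exact hsub (hV₀sub (aux_add_small ha hV₀sol hWsum hu hv))
  · -- negation
    rw [h0]
    intro s hs
    obtain ⟨a, ha, V, hV, hsub⟩ := (aux_mem_unb hτ).1 hs
    rw [mem_map]
    refine mem_of_superset (aux_basic_mem ha hV) ?_
    intro z hz
    refine hsub ?_
    show |(-z)| ⊓ a ∈ V
    rwa [abs_neg]
  · intro x
    rw [hnhds x, h0]

end AuxTop

lemma aux_cg_of_metrizable {Y : Type*} [TopologicalSpace Y]
    [TopologicalSpace.MetrizableSpace Y] (y : Y) : (𝓝 y).IsCountablyGenerated := by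
  letI := TopologicalSpace.metrizableSpaceMetric Y
  infer_instance

lemma aux_t1_of_metrizable {Y : Type*} [TopologicalSpace Y]
    [TopologicalSpace.MetrizableSpace Y] : T1Space Y := by
  letI := TopologicalSpace.metrizableSpaceMetric Y
  infer_instance

open scoped Uniformity in
lemma aux_metrizable {Y : Type*} [AddCommGroup Y] [ty : TopologicalSpace Y]
    [IsTopologicalAddGroup Y] [(𝓝 (0 : Y)).IsCountablyGenerated]
    (hsep : ∀ y : Y, y ≠ 0 → ∃ U ∈ 𝓝 (0 : Y), y ∉ U) :
    TopologicalSpace.MetrizableSpace Y := by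
  letI : UniformSpace Y := IsTopologicalAddGroup.rightUniformSpace Y
  haveI : IsUniformAddGroup Y := isUniformAddGroup_of_addCommGroup
  haveI : (𝓤 Y).IsCountablyGenerated := by
    rw [uniformity_eq_comap_nhds_zero' Y]
    exact Filter.comap.isCountablyGenerated _ _
  haveI : T0Space Y := by
    refine (t0Space_iff_inseparable Y).2 fun x y h => ?_
    by_contra hne
    obtain ⟨U, hU, hyU⟩ := hsep (y - x) (sub_ne_zero.2 (Ne.symm hne))
    have hx : (x + ·) '' U ∈ 𝓝 x := by
      rw [← map_add_left_nhds_zero x]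
      exact image_mem_map hU
    have hnn : 𝓝 x = 𝓝 y := h
    rw [hnn] at hx
    obtain ⟨u, hu, huy⟩ := mem_of_mem_nhds hx
    exact hyU (by rwa [← huy, add_sub_cancel_left])
  exact UniformSpace.metrizableSpace

lemma aux_le_of_tendsto [τ : TopologicalSpace X] (hτ : IsLocallySolidTop τ) (hT1 : T1Space X)
    {s : ℕ → X} {e c : X} (h : Tendsto s atTop (𝓝 e)) (hb : ∀ n, c ≤ s n) : c ≤ e := by
  haveI := hτ.1
  haveI := hT1
  have key : (e - c)⁻ = 0 := by
    by_contra hne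
    have hU : ({(e - c)⁻}ᶜ : Set X) ∈ 𝓝 (0 : X) := compl_singleton_mem_nhds (Ne.symm hne)
    obtain ⟨V, hV, hsol, hsub⟩ := hτ.2.2 _ hU
    have htt : Tendsto (fun n => s n - e) atTop (𝓝 0) := by
      simpa using h.sub (tendsto_const_nhds (x := e))
    obtain ⟨n, hn⟩ := (htt.eventually_mem hV).exists
    have hzero : (s n - c)⁻ = 0 := negPart_eq_zero.2 (sub_nonneg.2 (hb n))
    have h1 : |(e - c)⁻| ≤ |s n - e| := by
      calc |(e - c)⁻| = |(e - c)⁻ - (s n - c)⁻| := by rw [hzero, sub_zero]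
        _ = |(-(e - c) ⊔ 0) - (-(s n - c) ⊔ 0)| := by rw [negPart_def, negPart_def]
        _ ≤ |(-(e - c)) - (-(s n - c))| := abs_sup_sub_sup_le_abs _ _ 0
        _ = |s n - e| := by rw [neg_sub_neg, show s n - c - (e - c) = s n - e from by abel]
    have := hsub (hsol hn h1)
    exact this rfl
  have h2 := posPart_sub_negPart (e - c)
  rw [key, sub_zero] at h2
  have h3 : 0 ≤ e - c := h2 ▸ posPart_nonneg (e - c)
  exact sub_nonneg.1 h3

lemma aux_dir2 [τ : TopologicalSpace X] (hτ : IsLocallySolidTop τ)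
    [TopologicalSpace.MetrizableSpace X]
    {e : X} (he0 : 0 ≤ e) (hdense : closure (idealGenerated {e}) = Set.univ) :
    @TopologicalSpace.MetrizableSpace X (unbTopology τ Set.univ) := by
  haveI := hτ.1
  haveI : T1Space X := aux_t1_of_metrizable
  haveI : (𝓝 (0 : X)).IsCountablyGenerated := aux_cg_of_metrizable 0
  obtain ⟨A, hA⟩ := (𝓝 (0 : X)).exists_antitone_basis
  set N := unbNhdsZero τ Set.univ with hN
  set S : ℕ × ℕ → Set X := fun p => (fun x : X => |x| ⊓ (p.1 • e)) ⁻¹' (A p.2) with hS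
  have hSmem : ∀ p, S p ∈ N := fun p =>
    aux_basic_mem (aux_nsmul_nonneg he0 p.1) (hA.toHasBasis.mem_of_mem (i := p.2) trivial)
  have hcof : ∀ s ∈ N, ∃ p, S p ⊆ s := by
    intro s hs
    obtain ⟨a, ha, V, hV, hsub⟩ := (aux_mem_unb hτ).1 hs
    obtain ⟨V₁, hV₁, hV₁s, hV₁sub⟩ := hτ.2.2 V hV
    obtain ⟨Wh, hWh, hWhs, hWhsum⟩ := aux_half hτ hV₁
    have hclos : a ∈ closure (idealGenerated {e}) := by rw [hdense]; trivial
    have haW : {b : X | a - b ∈ Wh} ∈ 𝓝 a := by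
      have hca : Tendsto (fun b : X => a - b) (𝓝 a) (𝓝 (0 : X)) := by
        have := (tendsto_const_nhds (x := a) (f := 𝓝 a)).sub tendsto_id
        simpa using this
      exact hca hWh
    obtain ⟨z, hzW, hzI⟩ := mem_closure_iff_nhds.1 hclos _ haW
    obtain ⟨cz, hcz, hzle⟩ := aux_ideal_dominated e he0 hzI
    set za := |z| with hza
    obtain ⟨k, hk⟩ := exists_nat_ge cz
    have hyle : za ⊓ a ≤ k • e := by
      refine le_trans (le_trans inf_le_left hzle) ?_
      rw [← Nat.cast_smul_eq_nsmul ℝ]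
      exact aux_smul_le_smul hk he0
    have hy0 : (0 : X) ≤ za ⊓ a := le_inf (hza ▸ abs_nonneg z) ha
    have hay0 : (0 : X) ≤ a - za ⊓ a := sub_nonneg.2 inf_le_right
    have hay : a - za ⊓ a ∈ Wh := by
      refine hWhs hzW ?_
      rw [aux_abs_of_nonneg hay0]
      calc a - za ⊓ a ≤ |a ⊓ a - za ⊓ a| := by
            rw [inf_idem]; exact le_abs_self _
        _ ≤ |a - za| := abs_inf_sub_inf_le_abs a za a
        _ = |(|a|) - za| := by rw [aux_abs_of_nonneg ha]
        _ ≤ |a - z| := hza ▸ abs_abs_sub_abs_le a z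
    obtain ⟨n, -, hAn⟩ := hA.toHasBasis.mem_iff.1 hWh
    refine ⟨(k, n), fun w hw => ?_⟩
    have hw1 : |w| ⊓ (k • e) ∈ Wh := hAn hw
    have hw2 : |w| ⊓ (za ⊓ a) ∈ Wh := by
      refine hWhs hw1 ?_
      rw [aux_abs_of_nonneg (le_inf (abs_nonneg w) hy0),
        aux_abs_of_nonneg (le_inf (abs_nonneg w) (hy0.trans hyle))]
      exact inf_le_inf_left _ hyle
    have hsum2 : |w| ⊓ (za ⊓ a) + (a - za ⊓ a) ∈ V₁ := hWhsum _ hw2 _ hay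
    have hle2 : |w| ⊓ a ≤ |w| ⊓ (za ⊓ a) + (a - za ⊓ a) := by
      have hzz : a = za ⊓ a + (a - za ⊓ a) := by abel
      calc |w| ⊓ a = |w| ⊓ (za ⊓ a + (a - za ⊓ a)) := by rw [← hzz]
        _ ≤ _ := aux_inf_add_le hay0
    have hVa : |w| ⊓ a ∈ V₁ := by
      refine hV₁s hsum2 ?_
      rw [aux_abs_of_nonneg (le_inf (abs_nonneg w) ha),
        aux_abs_of_nonneg (add_nonneg (le_inf (abs_nonneg w) hy0) hay0)]
      exact hle2
    exact hsub (hV₁sub hVa)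
  have hNeq : N = ⨅ p : ℕ × ℕ, 𝓟 (S p) := by
    apply le_antisymm
    · exact le_iInf fun p => le_principal_iff.2 (hSmem p)
    · rw [Filter.le_def]
      intro s hs
      obtain ⟨p, hp⟩ := hcof s hs
      exact mem_of_superset (mem_iInf_of_mem p (mem_principal_self _)) hp
  have hNcg : N.IsCountablyGenerated := by rw [hNeq]; infer_instance
  have hg := aux_unb_group hτ
  have h0 : @nhds X (unbTopology τ Set.univ) 0 = N := by
    rw [aux_nhds_unb hτ 0]
    have : (fun y : X => 0 + y) = id := funext fun y => zero_add y
    rw [this, map_id]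
  haveI hcg' : (@nhds X (unbTopology τ Set.univ) 0).IsCountablyGenerated := by
    rw [h0]; exact hNcg
  refine @aux_metrizable X _ (unbTopology τ Set.univ) hg hcg' ?_
  rw [h0]
  intro y hy
  have hyabs : |y| ≠ 0 := fun h => hy (aux_abs_eq_zero h)
  have hU : ({|y|}ᶜ : Set X) ∈ 𝓝 (0 : X) := compl_singleton_mem_nhds (Ne.symm hyabs)
  refine ⟨(fun x : X => |x| ⊓ |y|) ⁻¹' {|y|}ᶜ, aux_basic_mem (abs_nonneg y) hU, ?_⟩
  simp [inf_idem]

lemma aux_dir1 [τ : TopologicalSpace X] (hτ : IsLocallySolidTop τ)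
    [TopologicalSpace.MetrizableSpace X]
    (hcomp : @CompleteSpace X (@IsTopologicalAddGroup.rightUniformSpace X _ τ hτ.1))
    (hm : @TopologicalSpace.MetrizableSpace X (unbTopology τ Set.univ)) :
    ∃ e : X, 0 ≤ e ∧ closure (idealGenerated {e}) = Set.univ := by
  letI := auxOrder X
  haveI := hτ.1
  haveI := hτ.2.1
  haveI : T1Space X := aux_t1_of_metrizable
  set N := unbNhdsZero τ Set.univ with hN
  have h0 : @nhds X (unbTopology τ Set.univ) 0 = N := by
    rw [aux_nhds_unb hτ 0]
    have : (fun y : X => 0 + y) = id := funext fun y => zero_add y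
    rw [this, map_id]
  haveI hNcg : N.IsCountablyGenerated := by
    rw [← h0]
    exact @aux_cg_of_metrizable X (unbTopology τ Set.univ) hm 0
  obtain ⟨W, hW⟩ := N.exists_antitone_basis
  have hpick : ∀ k, ∃ a : X, 0 ≤ a ∧ ∃ V ∈ 𝓝 (0 : X), (fun x : X => |x| ⊓ a) ⁻¹' V ⊆ W k :=
    fun k => (aux_mem_unb hτ).1 (hW.toHasBasis.mem_of_mem (i := k) trivial)
  choose a ha V hV hVW using hpick
  haveI : (𝓝 (0 : X)).IsCountablyGenerated := aux_cg_of_metrizable 0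
  obtain ⟨A, hA⟩ := (𝓝 (0 : X)).exists_antitone_basis
  have hstep : ∀ C : Set X, C ∈ 𝓝 (0 : X) → ∀ k : ℕ, ∃ D : Set X, D ∈ 𝓝 (0 : X) ∧ IsSolid D ∧
      D ⊆ A k ∧ D ⊆ C ∧ ∀ v ∈ D, ∀ w ∈ D, v + w ∈ C := by
    intro C hC k
    obtain ⟨W', hW', hWs', hWsum'⟩ := aux_half hτ hC
    obtain ⟨D, hD, hDs, hDsub⟩ := hτ.2.2 _
      (inter_mem (inter_mem hW' (hA.toHasBasis.mem_of_mem (i := k) trivial)) hC)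
    exact ⟨D, hD, hDs, fun x hx => (hDsub hx).1.2, fun x hx => (hDsub hx).2,
      fun v hv w hw => hWsum' v (hDsub hv).1.1 w (hDsub hw).1.1⟩
  let Bs : ℕ → {C : Set X // C ∈ 𝓝 (0 : X)} := fun k =>
    Nat.rec ⟨(hstep univ univ_mem 0).choose, (hstep univ univ_mem 0).choose_spec.1⟩
      (fun n p => ⟨(hstep p.1 p.2 (n + 1)).choose, (hstep p.1 p.2 (n + 1)).choose_spec.1⟩) k
  set B : ℕ → Set X := fun k => (Bs k).1 with hB
  have hBmem : ∀ k, B k ∈ 𝓝 (0 : X) := fun k => (Bs k).2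
  have hBsolid : ∀ k, IsSolid (B k) := by
    intro k
    cases k with
    | zero => exact (hstep univ univ_mem 0).choose_spec.2.1
    | succ n => exact (hstep (Bs n).1 (Bs n).2 (n + 1)).choose_spec.2.1
  have hBA : ∀ k, B k ⊆ A k := by
    intro k
    cases k with
    | zero => exact (hstep univ univ_mem 0).choose_spec.2.2.1
    | succ n => exact (hstep (Bs n).1 (Bs n).2 (n + 1)).choose_spec.2.2.1
  have hBsub : ∀ k, B (k + 1) ⊆ B k :=
    fun k => (hstep (Bs k).1 (Bs k).2 (k + 1)).choose_spec.2.2.2.1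
  have hBsum : ∀ k, ∀ v ∈ B (k + 1), ∀ w ∈ B (k + 1), v + w ∈ B k :=
    fun k => (hstep (Bs k).1 (Bs k).2 (k + 1)).choose_spec.2.2.2.2
  have hBle : ∀ p q : ℕ, p ≤ q → B q ⊆ B p := by
    intro p q hpq
    induction q, hpq using Nat.le_induction with
    | base => exact subset_rfl
    | succ n hn ih => exact (hBsub n).trans ih
  have hc : ∀ k : ℕ, ∃ c : ℝ, 0 < c ∧ c • a k ∈ B (k + 1) := by
    intro k
    have ht : Tendsto (fun m : ℕ => (1 / (m : ℝ)) • a k) atTop (𝓝 (0 : X)) := by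
      have := (tendsto_one_div_atTop_nhds_zero_nat (𝕜 := ℝ)).smul_const (a k)
      simpa using this
    obtain ⟨m, hm1, hm2⟩ :=
      ((eventually_ge_atTop 1).and (ht.eventually_mem (hBmem (k + 1)))).exists
    have hmpos : (0 : ℝ) < m := by exact_mod_cast hm1
    exact ⟨1 / (m : ℝ), one_div_pos.2 hmpos, hm2⟩
  choose c hcpos hcB using hc
  set t : ℕ → X := fun i => c i • a i with htdef
  have hterm : ∀ i, 0 ≤ t i := fun i => smul_nonneg (hcpos i).le (ha i)
  set s : ℕ → X := fun n => ∑ i ∈ Finset.range n, t i with hsdef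
  have hIco : ∀ k m : ℕ, (∑ i ∈ Finset.Ico m (m + k + 1), t i) ∈ B m := by
    intro k
    induction k with
    | zero =>
      intro m
      have h1 : Finset.Ico m (m + 0 + 1) = {m} := by
        ext i
        simp only [Finset.mem_Ico, Finset.mem_singleton]
        omega
      rw [h1, Finset.sum_singleton]
      exact hBsub m (hcB m)
    | succ k ih =>
      intro m
      rw [Finset.sum_eq_sum_Ico_succ_bot (by omega)]
      have h2 := ih (m + 1)
      rw [show (m + 1) + k + 1 = m + (k + 1) + 1 from by omega] at h2
      exact hBsum m _ (hcB m) _ h2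
  letI : UniformSpace X := IsTopologicalAddGroup.rightUniformSpace X
  haveI : IsUniformAddGroup X := isUniformAddGroup_of_addCommGroup
  haveI : CompleteSpace X := hcomp
  have hcauchy : CauchySeq s := by
    refine ⟨map_neBot, ?_⟩
    rw [uniformity_eq_comap_nhds_zero' X, ← map_le_iff_le_comap, prod_map_map_eq, map_map]
    rw [Filter.le_def]
    intro U hU
    rw [mem_map]
    obtain ⟨p0, -, hp0⟩ := hA.toHasBasis.mem_iff.1 hU
    have hBU : B p0 ⊆ U := (hBA p0).trans hp0
    refine mem_of_superset (prod_mem_prod (Ici_mem_atTop p0) (Ici_mem_atTop p0)) ?_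
    rintro ⟨m, n⟩ ⟨hm, hn⟩
    show s n + -s m ∈ U
    rw [← sub_eq_add_neg]
    rcases lt_trichotomy m n with h | h | h
    · have h1 := hIco (n - m - 1) m
      rw [show m + (n - m - 1) + 1 = n from by omega] at h1
      have h2 : s n - s m = ∑ i ∈ Finset.Ico m n, t i := (Finset.sum_Ico_eq_sub _ h.le).symm
      rw [h2]
      exact hBU (hBle p0 m hm h1)
    · rw [h, sub_self]
      exact mem_of_mem_nhds hU
    · have h1 := hIco (m - n - 1) n
      rw [show n + (m - n - 1) + 1 = m from by omega] at h1
      have h2 : s m - s n = ∑ i ∈ Finset.Ico n m, t i := (Finset.sum_Ico_eq_sub _ h.le).symm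
      have h3 : s m - s n ∈ B p0 := h2 ▸ hBle p0 n hn h1
      rw [show s n - s m = -(s m - s n) from by abel]
      exact hBU (aux_solid_symm (hBsolid p0) h3)
  obtain ⟨e, he⟩ := cauchySeq_tendsto_of_complete hcauchy
  have hs0 : ∀ n, 0 ≤ s n := fun n => Finset.sum_nonneg fun i _ => hterm i
  have he0 : 0 ≤ e := aux_le_of_tendsto hτ ‹T1Space X› he hs0
  have hek : ∀ k, t k ≤ e := by
    intro k
    have h1 : Tendsto (fun n => s (n + (k + 1))) atTop (𝓝 e) :=
      he.comp (tendsto_add_atTop_nat (k + 1))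
    refine aux_le_of_tendsto hτ ‹T1Space X› h1 fun n => ?_
    exact Finset.single_le_sum (f := t) (fun i _ => hterm i) (Finset.mem_range.2 (by omega))
  refine ⟨e, he0, ?_⟩
  have hpos : ∀ x : X, 0 ≤ x → x ∈ closure (idealGenerated {e}) := by
    intro x hx
    have hmem : ∀ n : ℕ, x ⊓ (n • e) ∈ idealGenerated {e} := by
      intro n
      rintro I ⟨⟨hI0, hIadd, hIsmul, hIsolid⟩, hIsub⟩
      have h1 : (n : ℝ) • e ∈ I := hIsmul _ _ (hIsub rfl)
      refine hIsolid h1 ?_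
      rw [aux_abs_of_nonneg (le_inf hx (aux_nsmul_nonneg he0 n)),
        aux_abs_of_nonneg (smul_nonneg (Nat.cast_nonneg n) he0), Nat.cast_smul_eq_nsmul]
      exact inf_le_right
    have hy : Tendsto (fun n : ℕ => x - x ⊓ (n • e)) atTop (𝓝 (0 : X)) := by
      rw [tendsto_def]
      intro U hU
      obtain ⟨U', hU', hU's, hU'sub⟩ := hτ.2.2 U hU
      have hG : (fun z : X => |z| ⊓ x) ⁻¹' U' ∈ N := aux_basic_mem hx hU'
      obtain ⟨k, -, hWkG⟩ := hW.toHasBasis.mem_iff.1 hG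
      obtain ⟨V', hV', hV's, hV'sub⟩ := hτ.2.2 _ (hV k)
      have htm : Tendsto (fun m : ℕ => (1 / (m : ℝ)) • x) atTop (𝓝 (0 : X)) := by
        have := (tendsto_one_div_atTop_nhds_zero_nat (𝕜 := ℝ)).smul_const x
        simpa using this
      obtain ⟨m, hm1, hmV⟩ := ((eventually_ge_atTop 1).and (htm.eventually_mem hV')).exists
      obtain ⟨n0, hn0⟩ := exists_nat_ge ((m : ℝ) / c k)
      refine mem_of_superset (Ici_mem_atTop n0) ?_
      intro n hn
      show x - x ⊓ (n • e) ∈ U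
      have hma : m • a k ≤ n • e := by
        have h1 : (m : ℝ) ≤ (n : ℝ) * c k := by
          rw [div_le_iff₀ (hcpos k)] at hn0
          have h2 : (n0 : ℝ) ≤ (n : ℝ) := by exact_mod_cast hn
          nlinarith [hcpos k]
        calc m • a k = (m : ℝ) • a k := (Nat.cast_smul_eq_nsmul ℝ m (a k)).symm
          _ ≤ ((n : ℝ) * c k) • a k := aux_smul_le_smul h1 (ha k)
          _ = (n : ℝ) • (c k • a k) := by rw [mul_smul]
          _ ≤ (n : ℝ) • e := smul_le_smul_of_nonneg_left (hek k) (Nat.cast_nonneg n)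
          _ = n • e := Nat.cast_smul_eq_nsmul ℝ n e
      set yn := x - x ⊓ (n • e) with hyn
      have hyn0 : 0 ≤ yn := sub_nonneg.2 inf_le_left
      have hynx : yn ≤ x := sub_le_self x (le_inf hx (aux_nsmul_nonneg he0 n))
      have hkey : yn ⊓ a k ≤ (m : ℝ)⁻¹ • x := by
        refine le_trans ?_ (aux_key hx (ha k) hm1)
        refine inf_le_inf_right (a k) ?_
        exact sub_le_sub_left (inf_le_inf_left x hma) x
      have h5 : yn ⊓ a k ∈ V' := by
        refine hV's hmV ?_
        rw [aux_abs_of_nonneg (le_inf hyn0 (ha k)),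
          aux_abs_of_nonneg (smul_nonneg (by positivity : (0 : ℝ) ≤ 1 / (m : ℝ)) hx), one_div]
        exact hkey
      have h6 : yn ∈ (fun z : X => |z| ⊓ a k) ⁻¹' (V k) := by
        show |yn| ⊓ a k ∈ V k
        rw [aux_abs_of_nonneg hyn0]
        exact hV'sub h5
      have h7 : yn ∈ (fun z : X => |z| ⊓ x) ⁻¹' U' := hWkG (hVW k h6)
      have h8 : |yn| ⊓ x ∈ U' := h7
      rw [aux_abs_of_nonneg hyn0, inf_eq_left.2 hynx] at h8
      exact hU'sub h8
    have h9 : Tendsto (fun n : ℕ => x - (x - x ⊓ (n • e))) atTop (𝓝 (x - 0)) :=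
      (tendsto_const_nhds (x := x)).sub hy
    have h10 : Tendsto (fun n : ℕ => x ⊓ (n • e)) atTop (𝓝 x) := by
      simpa using h9
    exact mem_closure_of_tendsto h10 (Filter.Eventually.of_forall hmem)
  rw [eq_univ_iff_forall]
  intro x
  let G : AddSubgroup X :=
    { carrier := idealGenerated {e}
      zero_mem' := fun I hI => hI.1.1
      add_mem' := fun {u v} hu hv I hI => hI.1.2.1 _ (hu I hI) _ (hv I hI)
      neg_mem' := fun {u} hu I hI => by
        have := hI.1.2.2.1 (-1) u (hu I hI)
        rwa [neg_one_smul] at this }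
  have h1 : x⁺ ∈ closure (G : Set X) := hpos x⁺ (posPart_nonneg x)
  have h2 : x⁻ ∈ closure (G : Set X) := hpos x⁻ (negPart_nonneg x)
  have h3 : x⁺ - x⁻ ∈ G.topologicalClosure := sub_mem (by exact h1) (by exact h2)
  rw [posPart_sub_negPart] at h3
  exact h3


/-- if `τ` is complete and metrizable, then `u τ` is metrizable iff `X`
has a quasi-interior point. -/
theorem stmt9 (hArch : VLArchimedean X) (τ : TopologicalSpace X)
    (hτ : IsLocallySolidTop τ) (hmet : @TopologicalSpace.MetrizableSpace X τ)
    (hcomp : @CompleteSpace X (@IsTopologicalAddGroup.rightUniformSpace X _ τ hτ.1)) :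
    @TopologicalSpace.MetrizableSpace X (unbTopology τ Set.univ) ↔
      ∃ e : X, 0 ≤ e ∧ @closure X τ (idealGenerated {e}) = Set.univ := by
  letI := τ
  haveI := hmet
  constructor
  · intro hm
    exact aux_dir1 hτ hcomp hm
  · rintro ⟨e, he0, hdense⟩
    exact aux_dir2 hτ he0 hdense
end
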